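/- Let q be a positive integer and for i ≥ 1 set ρ_i := (1/i)·Σ_{d ∣ i} μ(i/d)·(q^d + 1); each ρ_i is a nonnegative integer (when q is a prime power, ρ_i is the number of closed points of degree i of ℙ¹ over 𝔽_q). Let η : {1,2,…} → ℕ be finitely supported with weight |η| = Σ_i i·η_i ≤ 3, and let λ := η + ρ (so λ_i = η_i + ρ_i). Then σ_5(λ) := −Σ_{μ ≤ λ, |μ| ≤ 5} (−1)^{ℓ(μ)} Π_{i≥1} binom(λ_i, μ_i) = 0, where the sum is over finitely supported μ with μ_i ≤ λ_i for all i and weight |μ| = Σ_i i·μ_i ≤ 5 (this is a finite sum, even though λ is not finitely supported). -/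

import Mathlib

open scoped Classical

/-- Generalized binomial coefficient `C(a, k) = a(a-1)⋯(a-k+1)/k!` for `a : ℚ`;
for `a` a nonnegative integer this is the usual binomial coefficient. -/
def genChoose (a : ℚ) (k : ℕ) : ℚ :=
  (∏ j ∈ Finset.range k, (a - (j : ℚ))) / (Nat.factorial k : ℚ)

/-- The weight `|μ| = Σ_i i·μ_i` of a finitely supported `μ : ℕ →₀ ℕ`. -/
def fweight (m : ℕ →₀ ℕ) : ℕ := ∑ i ∈ m.support, i * m i

/-- The length `ℓ(μ) = Σ_i μ_i` of a finitely supported `μ : ℕ →₀ ℕ`. -/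
def flength (m : ℕ →₀ ℕ) : ℕ := ∑ i ∈ m.support, m i

/-- A finitely supported `μ : ℕ →₀ ℕ` with `μ 0 = 0` and weight `≤ 5` is bounded by this
element, so the sum defining `σ₅` below ranges over all such `μ`. -/
noncomputable def bnd : ℕ →₀ ℕ := ∑ i ∈ Finset.range 6, Finsupp.single i 5

open ArithmeticFunction Finset

lemma fermat_dvd (p q c : ℕ) (hp : p.Prime) : (p:ℤ) ∣ (q:ℤ)^(p*c) - (q:ℤ)^c := by
  haveI : Fact p.Prime := ⟨hp⟩
  have h1 : (((q:ℤ)^(p*c) - (q:ℤ)^c : ℤ) : ZMod p) = 0 := by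
    push_cast
    rw [mul_comm p c, pow_mul, ZMod.pow_card]
    ring
  exact (ZMod.intCast_zmod_eq_zero_iff_dvd _ p).mp h1

lemma ppow_dvd (q p n : ℕ) (hp : p.Prime) (hn : n ≠ 0) :
    (p:ℤ)^(n.factorization p) ∣ ∑ d ∈ n.divisors, (moebius d : ℤ) * (q:ℤ)^(n/d) := by
  set k := n.factorization p with hk
  rcases Nat.eq_zero_or_pos k with h0 | hkpos
  · simp [h0]
  set m := n / p^k with hm
  have hnm : p ^ k * m = n := Nat.ordProj_mul_ordCompl_eq_self n p
  have hpm : ¬ p ∣ m := Nat.not_dvd_ordCompl hp hn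
  have hm0 : m ≠ 0 := by
    intro h; rw [h, mul_zero] at hnm; exact hn hnm.symm
  have hppos : 0 < p := hp.pos
  have hfilt1 : n.divisors.filter (fun d => ¬ p ∣ d) = m.divisors := by
    ext d
    simp only [Finset.mem_filter, Nat.mem_divisors]
    constructor
    · rintro ⟨⟨hd, -⟩, hpd⟩
      refine ⟨?_, hm0⟩
      have hco : d.Coprime (p^k) := (Nat.Coprime.pow_right _
        ((Nat.Prime.coprime_iff_not_dvd hp).mpr hpd).symm)
      exact hco.dvd_of_dvd_mul_left (hnm ▸ hd)
    · rintro ⟨hd, -⟩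
      refine ⟨⟨hd.trans ⟨p^k, by rw [mul_comm]; exact hnm.symm⟩, hn⟩, fun hpd => hpm (hpd.trans hd)⟩
  have hinj : ∀ x ∈ m.divisors, ∀ y ∈ m.divisors, p * x = p * y → x = y := by
    intro a _ b _ h; exact Nat.eq_of_mul_eq_mul_left hppos h
  have key1 : ∑ d ∈ n.divisors.filter (fun d => p ∣ d), (moebius d : ℤ) * (q:ℤ)^(n/d)
      = ∑ e ∈ m.divisors, (moebius (p * e) : ℤ) * (q:ℤ)^(n/(p*e)) := by
    rw [← Finset.sum_image (s := m.divisors) (g := fun e => p * e) (f := fun d => (moebius d : ℤ) * (q:ℤ)^(n/d)) hinj]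
    symm
    apply Finset.sum_subset
    · intro d hd
      simp only [Finset.mem_image] at hd
      obtain ⟨e, he, rfl⟩ := hd
      simp only [Nat.mem_divisors] at he
      simp only [Finset.mem_filter, Nat.mem_divisors]
      refine ⟨⟨?_, hn⟩, Dvd.intro e rfl⟩
      calc p * e ∣ p * m := mul_dvd_mul_left p he.1
        _ ∣ n := by
            refine ⟨p^(k-1), ?_⟩
            rw [← hnm, mul_comm (p*m), ← mul_assoc, ← pow_succ]
            congr 2
            omega
    · intro d hd hnd
      simp only [Finset.mem_filter, Nat.mem_divisors] at hd
      obtain ⟨⟨hdn, -⟩, hpd⟩ := hd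
      by_contra hne
      have hμ : moebius d ≠ 0 := by
        intro h0; rw [h0] at hne; simp at hne
      have hsq : Squarefree d := moebius_ne_zero_iff_squarefree.mp hμ
      obtain ⟨e, rfl⟩ := hpd
      have hpe : ¬ p ∣ e := by
        intro hpe
        obtain ⟨f, rfl⟩ := hpe
        exact hp.one_lt.ne' (Nat.isUnit_iff.mp (hsq p ⟨f, by ring⟩))
      have hem : e ∣ m := by
        have hedvd : e ∣ n := (dvd_mul_left e p).trans hdn
        have hco : e.Coprime (p^k) := (Nat.Coprime.pow_right _
          ((Nat.Prime.coprime_iff_not_dvd hp).mpr hpe).symm)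
        exact hco.dvd_of_dvd_mul_left (hnm ▸ hedvd)
      exact hnd (Finset.mem_image.mpr ⟨e, Nat.mem_divisors.mpr ⟨hem, hm0⟩, rfl⟩)
  have hsum : ∑ d ∈ n.divisors, (moebius d : ℤ) * (q:ℤ)^(n/d)
      = ∑ e ∈ m.divisors, (moebius e : ℤ) * ((q:ℤ)^(n/e) - (q:ℤ)^((n/p)/e)) := by
    rw [← Finset.sum_filter_add_sum_filter_not n.divisors (fun d => ¬ p ∣ d), hfilt1]
    simp only [not_not]
    rw [key1]
    rw [← Finset.sum_add_distrib]
    apply Finset.sum_congr rfl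
    intro e he
    simp only [Nat.mem_divisors] at he
    have hpe : ¬ p ∣ e := fun h => hpm (h.trans he.1)
    have hμpe : (moebius (p * e) : ℤ) = - moebius e := by
      rw [isMultiplicative_moebius.map_mul_of_coprime
        ((Nat.Prime.coprime_iff_not_dvd hp).mpr hpe), moebius_apply_prime hp]
      ring
    have hdiv : n / (p * e) = (n / p) / e := by
      rw [Nat.div_div_eq_div_mul]
    rw [hμpe, hdiv]
    ring
  rw [hsum]
  apply Finset.dvd_sum
  intro e he
  simp only [Nat.mem_divisors] at he
  obtain ⟨c, hc⟩ := he.1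
  have hepos : 0 < e := Nat.pos_of_dvd_of_pos he.1 (Nat.pos_of_ne_zero hm0)
  obtain ⟨k', hk'⟩ : ∃ k', k = k' + 1 := ⟨k - 1, by omega⟩
  have h1 : n / e = p ^ k * c := by
    have : n = e * (p ^ k * c) := by rw [← hnm, hc]; ring
    rw [this, Nat.mul_div_cancel_left _ hepos]
  have h2 : n / p / e = p ^ k' * c := by
    have hp1 : n / p = p ^ k' * (e * c) := by
      have : n = p * (p ^ k' * (e * c)) := by rw [← hnm, hc, hk', pow_succ]; ring
      rw [this, Nat.mul_div_cancel_left _ hppos]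
    rw [hp1, show p ^ k' * (e * c) = e * (p ^ k' * c) by ring,
      Nat.mul_div_cancel_left _ hepos]
  have key := dvd_sub_pow_of_dvd_sub (fermat_dvd p q c hp) k'
  rw [← pow_mul, ← pow_mul, show p * c * p ^ k' = p ^ (k' + 1) * c by rw [pow_succ]; ring,
    show c * p ^ k' = p ^ k' * c by ring, ← hk'] at key
  rw [h1, h2, hk']
  rw [hk'] at key
  exact Dvd.dvd.mul_left key _

lemma musum (n : ℕ) (hn : n ≠ 0) :
    ∑ d ∈ n.divisors, (moebius d : ℤ) = if n = 1 then 1 else 0 := by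
  rw [← coe_mul_zeta_apply, moebius_mul_coe_zeta, one_apply]

lemma mu_ge (d : ℕ) : -1 ≤ (moebius d : ℤ) := by
  by_cases h : Squarefree d
  · rw [moebius_apply_of_squarefree h]
    rcases Nat.even_or_odd (cardFactors d) with he | ho
    · rw [he.neg_one_pow]; norm_num
    · rw [ho.neg_one_pow]
  · rw [moebius_eq_zero_of_not_squarefree h]
    norm_num

lemma geo_bound (q M : ℕ) (hq : 2 ≤ q) :
    ∑ j ∈ Finset.Icc 1 M, (q:ℤ)^j ≤ (q:ℤ)^(M+1) := by
  induction M with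
  | zero => simp
  | succ M ih =>
      rw [Finset.sum_Icc_succ_top (by omega)]
      have h2 : (2:ℤ) * (q:ℤ)^(M+1) ≤ (q:ℤ)^(M+2) := by
        rw [show ((q:ℤ))^(M+2) = (q:ℤ) * (q:ℤ)^(M+1) by ring]
        exact mul_le_mul_of_nonneg_right (by exact_mod_cast hq) (by positivity)
      linarith

lemma S_nonneg (q n : ℕ) (hq : 1 ≤ q) (hn : n ≠ 0) :
    0 ≤ ∑ d ∈ n.divisors, (moebius d : ℤ) * (q:ℤ)^(n/d) := by
  rcases eq_or_lt_of_le hq with h1 | h2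
  · have : ∀ d ∈ n.divisors, (moebius d : ℤ) * (q:ℤ)^(n/d) = (moebius d : ℤ) := by
      intro d _; rw [← h1]; push_cast; ring
    rw [Finset.sum_congr rfl this, musum n hn]
    split <;> norm_num
  · have hq2 : 2 ≤ q := h2
    have h1mem : 1 ∈ n.divisors := Nat.one_mem_divisors.mpr hn
    rw [← Finset.add_sum_erase _ _ h1mem]
    simp only [moebius_apply_one, Nat.div_one, Int.cast_one, one_mul]
    have hbound : ∑ d ∈ n.divisors.erase 1, (q:ℤ)^(n/d) ≤ (q:ℤ)^n := by
      rcases eq_or_ne n 1 with rfl | hn1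
      · simp
      have hinj : ∀ x ∈ n.divisors.erase 1, ∀ y ∈ n.divisors.erase 1,
          n / x = n / y → x = y := by
        intro x hx y hy hxy
        have hx' := Nat.mem_divisors.mp (Finset.mem_of_mem_erase hx)
        have hy' := Nat.mem_divisors.mp (Finset.mem_of_mem_erase hy)
        rw [← Nat.div_div_self hx'.1 hn, ← Nat.div_div_self hy'.1 hn, hxy]
      rw [← Finset.sum_image (g := fun d => n / d) (f := fun j => (q:ℤ)^j) hinj]
      have hsub : (n.divisors.erase 1).image (fun d => n / d) ⊆ Finset.Icc 1 (n/2) := by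
        intro j hj
        simp only [Finset.mem_image] at hj
        obtain ⟨d, hd, rfl⟩ := hj
        have hd1 : d ≠ 1 := Finset.ne_of_mem_erase hd
        have hd' := Nat.mem_divisors.mp (Finset.mem_of_mem_erase hd)
        have hdpos : 0 < d := Nat.pos_of_dvd_of_pos hd'.1 (Nat.pos_of_ne_zero hn)
        have hdle : d ≤ n := Nat.le_of_dvd (Nat.pos_of_ne_zero hn) hd'.1
        simp only [Finset.mem_Icc]
        exact ⟨Nat.div_pos hdle hdpos, Nat.div_le_div_left (by omega) (by omega)⟩
      calc ∑ j ∈ (n.divisors.erase 1).image (fun d => n / d), (q:ℤ)^j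
          ≤ ∑ j ∈ Finset.Icc 1 (n/2), (q:ℤ)^j :=
            Finset.sum_le_sum_of_subset_of_nonneg hsub (fun j _ _ => by positivity)
        _ ≤ (q:ℤ)^(n/2+1) := geo_bound q (n/2) hq2
        _ ≤ (q:ℤ)^n := by
            apply pow_le_pow_right₀ (by exact_mod_cast hq)
            omega
    have hterm : ∀ d ∈ n.divisors.erase 1,
        -(q:ℤ)^(n/d) ≤ (moebius d : ℤ) * (q:ℤ)^(n/d) := by
      intro d _
      have := mul_le_mul_of_nonneg_right (mu_ge d) (by positivity : (0:ℤ) ≤ (q:ℤ)^(n/d))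
      linarith
    have := Finset.sum_le_sum hterm
    rw [Finset.sum_neg_distrib] at this
    linarith

lemma n_dvd_S (q n : ℕ) (hn : n ≠ 0) :
    (n:ℤ) ∣ ∑ d ∈ n.divisors, (moebius d : ℤ) * (q:ℤ)^(n/d) := by
  set S := ∑ d ∈ n.divisors, (moebius d : ℤ) * (q:ℤ)^(n/d) with hS
  rcases eq_or_ne S 0 with h0 | hS0
  · rw [h0]; exact dvd_zero _
  have hs0 : S.natAbs ≠ 0 := fun h => hS0 (Int.natAbs_eq_zero.mp h)
  have hdvd : n ∣ S.natAbs := by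
    rw [← Nat.factorization_le_iff_dvd hn hs0]
    rw [Finsupp.le_iff]
    intro p hp
    have hpp : p.Prime := Nat.prime_of_mem_primeFactors (by
      rwa [Nat.support_factorization] at hp)
    rw [← Nat.Prime.pow_dvd_iff_le_factorization hpp hs0]
    have h := ppow_dvd q p n hpp hn
    have h2 : ((p^(n.factorization p) : ℕ) : ℤ).natAbs ∣ S.natAbs :=
      Int.natAbs_dvd_natAbs.mpr (by push_cast; exact h)
    rwa [Int.natAbs_natCast] at h2
  exact Int.dvd_natAbs.mp (Int.natCast_dvd_natCast.mpr hdvd)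

lemma T_exists (q n : ℕ) (hq : 1 ≤ q) (hn : n ≠ 0) :
    ∃ N : ℕ, ∑ d ∈ n.divisors, (moebius (n/d) : ℤ) * ((q:ℤ)^d + 1) = (n:ℤ) * N := by
  have split : ∑ d ∈ n.divisors, (moebius (n/d) : ℤ) * ((q:ℤ)^d + 1)
      = (∑ d ∈ n.divisors, (moebius (n/d) : ℤ) * (q:ℤ)^d)
        + ∑ d ∈ n.divisors, (moebius (n/d) : ℤ) := by
    simp_rw [mul_add, mul_one, Finset.sum_add_distrib]
  have r1 : ∑ d ∈ n.divisors, (moebius (n/d) : ℤ) * (q:ℤ)^d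
      = ∑ d ∈ n.divisors, (moebius d : ℤ) * (q:ℤ)^(n/d) := by
    rw [← Nat.sum_divisorsAntidiagonal' (f := fun a b => (moebius a : ℤ) * (q:ℤ)^b),
      Nat.sum_divisorsAntidiagonal (f := fun a b => (moebius a : ℤ) * (q:ℤ)^b)]
  have r2 : ∑ d ∈ n.divisors, (moebius (n/d) : ℤ) = if n = 1 then 1 else 0 := by
    rw [Nat.sum_div_divisors n (fun d => (moebius d : ℤ))]
    exact musum n hn
  rw [split, r1, r2]
  have hdvd : (n:ℤ) ∣ (∑ d ∈ n.divisors, (moebius d : ℤ) * (q:ℤ)^(n/d))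
      + (if n = 1 then 1 else 0) := by
    apply dvd_add (n_dvd_S q n hn)
    split
    · simp_all
    · exact dvd_zero _
  have hnonneg : (0:ℤ) ≤ (∑ d ∈ n.divisors, (moebius d : ℤ) * (q:ℤ)^(n/d))
      + (if n = 1 then 1 else 0) := by
    have := S_nonneg q n hq hn
    split <;> linarith
  obtain ⟨c, hc⟩ := hdvd
  have hc0 : 0 ≤ c := by
    by_contra hneg
    push_neg at hneg
    have : (n:ℤ) * c < 0 := mul_neg_of_pos_of_neg (by exact_mod_cast Nat.pos_of_ne_zero hn) hneg
    omega
  exact ⟨c.toNat, by rw [hc, Int.toNat_of_nonneg hc0]⟩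

lemma genChoose_natCast (n k : ℕ) : genChoose (n:ℚ) k = (n.choose k : ℚ) := by
  rcases lt_or_ge n k with h | h
  · rw [Nat.choose_eq_zero_of_lt h, genChoose]
    rw [Finset.prod_eq_zero (Finset.mem_range.mpr h) (by simp)]
    simp
  · rw [genChoose]
    have hprod : (∏ j ∈ Finset.range k, ((n:ℚ) - (j:ℚ))) = (n.descFactorial k : ℚ) := by
      rw [Nat.descFactorial_eq_prod_range, Nat.cast_prod]
      apply Finset.prod_congr rfl
      intro j hj
      have hj' : j ≤ n := le_trans (le_of_lt (Finset.mem_range.mp hj)) h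
      rw [Nat.cast_sub hj']
    rw [hprod, Nat.choose_eq_descFactorial_div_factorial,
      Nat.cast_div (Nat.factorial_dvd_descFactorial n k)
        (by exact_mod_cast (Nat.factorial_pos k).ne')]

lemma genChoose_zero (a : ℚ) : genChoose a 0 = 1 := by simp [genChoose]
lemma genChoose_one (a : ℚ) : genChoose a 1 = a := by
  rw [genChoose]; norm_num [Finset.prod_range_succ]
lemma genChoose_two (a : ℚ) : genChoose a 2 = a * (a - 1) / 2 := by
  rw [genChoose]; norm_num [Finset.prod_range_succ, Nat.factorial]
lemma genChoose_three (a : ℚ) : genChoose a 3 = a * (a - 1) * (a - 2) / 6 := by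
  rw [genChoose]; norm_num [Finset.prod_range_succ, Nat.factorial]
lemma genChoose_four (a : ℚ) : genChoose a 4 = a * (a - 1) * (a - 2) * (a - 3) / 24 := by
  rw [genChoose]; norm_num [Finset.prod_range_succ, Nat.factorial]
lemma genChoose_five (a : ℚ) : genChoose a 5 = a * (a - 1) * (a - 2) * (a - 3) * (a - 4) / 120 := by
  rw [genChoose]; norm_num [Finset.prod_range_succ, Nat.factorial]

lemma bnd_apply (j : ℕ) : bnd j = if j < 6 then 5 else 0 := by
  rw [bnd, Finsupp.finset_sum_apply]
  rw [Finset.sum_congr rfl (fun i _ => Finsupp.single_apply)]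
  rw [Finset.sum_ite_eq' (Finset.range 6) j (fun _ => 5)]
  simp [Finset.mem_range]

lemma fweight_eq (m : ℕ →₀ ℕ) (h6 : ∀ j, 6 ≤ j → m j = 0) :
    fweight m = m 1 + 2 * m 2 + 3 * m 3 + 4 * m 4 + 5 * m 5 := by
  have hsub : m.support ⊆ Finset.range 6 := by
    intro j hj
    rw [Finset.mem_range]
    by_contra hc
    exact (Finsupp.mem_support_iff.mp hj) (h6 j (by omega))
  rw [fweight, Finset.sum_subset hsub (fun x _ hx => by
    rw [Finsupp.notMem_support_iff.mp hx, mul_zero])]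
  simp [Finset.sum_range_succ]

lemma flength_eq (m : ℕ →₀ ℕ) (h6 : ∀ j, 6 ≤ j → m j = 0) :
    flength m = m 0 + m 1 + m 2 + m 3 + m 4 + m 5 := by
  have hsub : m.support ⊆ Finset.range 6 := by
    intro j hj
    rw [Finset.mem_range]
    by_contra hc
    exact (Finsupp.mem_support_iff.mp hj) (h6 j (by omega))
  rw [flength, Finset.sum_subset hsub (fun x _ hx => Finsupp.notMem_support_iff.mp hx)]
  simp [Finset.sum_range_succ]

lemma prod_eq (m : ℕ →₀ ℕ) (h6 : ∀ j, 6 ≤ j → m j = 0) (f : ℕ → ℕ → ℚ)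
    (hf : ∀ i, f i 0 = 1) :
    ∏ i ∈ m.support, f i (m i)
      = f 0 (m 0) * f 1 (m 1) * f 2 (m 2) * f 3 (m 3) * f 4 (m 4) * f 5 (m 5) := by
  have hsub : m.support ⊆ Finset.range 6 := by
    intro j hj
    rw [Finset.mem_range]
    by_contra hc
    exact (Finsupp.mem_support_iff.mp hj) (h6 j (by omega))
  rw [Finset.prod_subset hsub (fun x _ hx => by
    rw [Finsupp.notMem_support_iff.mp hx, hf])]
  simp [Finset.prod_range_succ]

noncomputable def enc (t : ℕ × ℕ × ℕ × ℕ × ℕ) : ℕ →₀ ℕ :=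
  Finsupp.single 1 t.1 + Finsupp.single 2 t.2.1 + Finsupp.single 3 t.2.2.1
    + Finsupp.single 4 t.2.2.2.1 + Finsupp.single 5 t.2.2.2.2

lemma enc_0 (t : ℕ × ℕ × ℕ × ℕ × ℕ) : enc t 0 = 0 := by simp [enc]
lemma enc_1 (t : ℕ × ℕ × ℕ × ℕ × ℕ) : enc t 1 = t.1 := by simp [enc]
lemma enc_2 (t : ℕ × ℕ × ℕ × ℕ × ℕ) : enc t 2 = t.2.1 := by simp [enc]
lemma enc_3 (t : ℕ × ℕ × ℕ × ℕ × ℕ) : enc t 3 = t.2.2.1 := by simp [enc]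
lemma enc_4 (t : ℕ × ℕ × ℕ × ℕ × ℕ) : enc t 4 = t.2.2.2.1 := by simp [enc]
lemma enc_5 (t : ℕ × ℕ × ℕ × ℕ × ℕ) : enc t 5 = t.2.2.2.2 := by simp [enc]
lemma enc_ge (t : ℕ × ℕ × ℕ × ℕ × ℕ) (j : ℕ) (hj : 6 ≤ j) : enc t j = 0 := by
  rw [enc]
  simp only [Finsupp.add_apply, Finsupp.single_apply]
  rw [if_neg (by omega), if_neg (by omega), if_neg (by omega), if_neg (by omega),
    if_neg (by omega)]
  simp

def TL : Finset (ℕ × ℕ × ℕ × ℕ × ℕ) :=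
  (Finset.range 6 ×ˢ Finset.range 3 ×ˢ Finset.range 2 ×ˢ Finset.range 2 ×ˢ Finset.range 2).filter
    (fun t => t.1 + 2*t.2.1 + 3*t.2.2.1 + 4*t.2.2.2.1 + 5*t.2.2.2.2 ≤ 5)

lemma mem_TL (t : ℕ × ℕ × ℕ × ℕ × ℕ) : t ∈ TL ↔
    (t.1 < 6 ∧ t.2.1 < 3 ∧ t.2.2.1 < 2 ∧ t.2.2.2.1 < 2 ∧ t.2.2.2.2 < 2)
      ∧ t.1 + 2*t.2.1 + 3*t.2.2.1 + 4*t.2.2.2.1 + 5*t.2.2.2.2 ≤ 5 := by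
  simp [TL, Finset.mem_filter, Finset.mem_product, Finset.mem_range]


/-- Let `q` be a positive integer and `ρ i = (1/i) Σ_{d ∣ i} μ(i/d)(q^d + 1)`
for `i ≥ 1`; each `ρ i` is a nonnegative integer.  For any finitely supported
`η : {1,2,…} → ℕ` of weight `≤ 3` (encoded as `eta : ℕ →₀ ℕ` with `eta 0 = 0`), setting
`λ = η + ρ` (an infinite partition), one has
`σ₅(λ) = −Σ_{μ ≤ λ, |μ| ≤ 5} (−1)^{ℓ(μ)} Π_{i ≥ 1} binom(λ_i, μ_i) = 0`, the sum being over
finitely supported `μ` with `μ_i ≤ λ_i` for all `i` and `Σ_i i·μ_i ≤ 5`. -/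
theorem sigma_five_of_double_line (q : ℕ) (hq : 1 ≤ q)
    (ρ : ℕ → ℚ)
    (hρ : ∀ i : ℕ, 1 ≤ i → ρ i = (1 / (i : ℚ)) * ∑ d ∈ i.divisors,
        ((ArithmeticFunction.moebius (i / d) : ℤ) : ℚ) * ((q : ℚ) ^ d + 1))
    (eta : ℕ →₀ ℕ) (heta0 : eta 0 = 0) (heta : fweight eta ≤ 3)
    (lam : ℕ → ℚ)
    (hlam : ∀ i : ℕ, lam i = if i = 0 then 0 else (eta i : ℚ) + ρ i) :
    (∀ i : ℕ, 1 ≤ i → ∃ n : ℕ, ρ i = (n : ℚ)) ∧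
    -(∑ m ∈ (Finset.Iic bnd).filter
          (fun m => (∀ i : ℕ, (m i : ℚ) ≤ lam i) ∧ fweight m ≤ 5),
        (-1 : ℚ) ^ (flength m) * ∏ i ∈ m.support, genChoose (lam i) (m i)) = 0 := by
  classical
  have part1 : ∀ i : ℕ, 1 ≤ i → ∃ n : ℕ, ρ i = (n : ℚ) := by
    intro i hi
    obtain ⟨N, hN⟩ := T_exists q i hq (by omega)
    refine ⟨N, ?_⟩
    rw [hρ i hi]
    have hcast : (∑ d ∈ i.divisors, ((moebius (i / d) : ℤ) : ℚ) * ((q : ℚ) ^ d + 1))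
        = (((∑ d ∈ i.divisors, (moebius (i/d) : ℤ) * ((q:ℤ)^d + 1)) : ℤ) : ℚ) := by
      push_cast
      rfl
    have hi0 : (i:ℚ) ≠ 0 := Nat.cast_ne_zero.mpr (by omega)
    rw [hcast, hN]
    push_cast
    field_simp
  refine ⟨part1, ?_⟩
  have hlam0 : lam 0 = 0 := by rw [hlam]; simp
  have hLex : ∀ i : ℕ, ∃ Li : ℕ, lam i = (Li : ℚ) := by
    intro i
    rcases Nat.eq_zero_or_pos i with rfl | hi
    · exact ⟨0, by simpa using hlam0⟩
    · obtain ⟨N, hN⟩ := part1 i hi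
      exact ⟨eta i + N, by rw [hlam, if_neg (by omega), hN]; push_cast; ring⟩
  choose L hL using hLex
  -- rho values
  have hρ1 : ρ 1 = (q:ℚ) + 1 := by
    rw [hρ 1 (by norm_num), show (1:ℕ).divisors = {1} from by decide]
    norm_num [moebius_apply_one]
  have hρ2 : ρ 2 = ((q:ℚ)^2 - q) / 2 := by
    rw [hρ 2 (by norm_num), show (2:ℕ).divisors = {1, 2} from by decide]
    rw [Finset.sum_insert (by decide), Finset.sum_singleton]
    norm_num [moebius_apply_one, moebius_apply_prime Nat.prime_two]
    ring
  have hρ3 : ρ 3 = ((q:ℚ)^3 - q) / 3 := by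
    rw [hρ 3 (by norm_num), show (3:ℕ).divisors = {1, 3} from by decide]
    rw [Finset.sum_insert (by decide), Finset.sum_singleton]
    norm_num [moebius_apply_one, moebius_apply_prime Nat.prime_three]
    ring
  have hρ4 : ρ 4 = ((q:ℚ)^4 - (q:ℚ)^2) / 4 := by
    rw [hρ 4 (by norm_num), show (4:ℕ).divisors = {1, 2, 4} from by decide]
    rw [Finset.sum_insert (by decide), Finset.sum_insert (by decide), Finset.sum_singleton]
    norm_num [moebius_apply_one, moebius_apply_prime Nat.prime_two,
      moebius_eq_zero_of_not_squarefree (by decide : ¬ Squarefree 4)]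
    ring
  have hρ5 : ρ 5 = ((q:ℚ)^5 - q) / 5 := by
    rw [hρ 5 (by norm_num), show (5:ℕ).divisors = {1, 5} from by decide]
    rw [Finset.sum_insert (by decide), Finset.sum_singleton]
    norm_num [moebius_apply_one, moebius_apply_prime (by norm_num : Nat.Prime 5)]
    ring
  -- eta facts
  have heta4 : ∀ i, 4 ≤ i → eta i = 0 := by
    intro i hi
    by_contra hne
    have hmem : i ∈ eta.support := Finsupp.mem_support_iff.mpr hne
    have hle : i * eta i ≤ fweight eta :=
      Finset.single_le_sum (f := fun j => j * eta j) (fun j _ => Nat.zero_le _) hmem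
    have h4 : 4 ≤ i * eta i :=
      le_trans (by omega) (Nat.mul_le_mul hi (Nat.one_le_iff_ne_zero.mpr hne))
    omega
  have hwt : eta 1 + 2 * eta 2 + 3 * eta 3 ≤ 3 := by
    rw [fweight_eq eta (fun j hj => heta4 j (by omega)), heta4 4 (by norm_num),
      heta4 5 (by norm_num)] at heta
    omega
  rw [neg_eq_zero]
  set F : (ℕ →₀ ℕ) → ℚ :=
    fun m => (-1:ℚ)^(flength m) * ∏ i ∈ m.support, genChoose (lam i) (m i) with hF
  have hstep1 : ∑ m ∈ (Finset.Iic bnd).filter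
        (fun m => (∀ i : ℕ, (m i : ℚ) ≤ lam i) ∧ fweight m ≤ 5), F m
      = ∑ m ∈ (Finset.Iic bnd).filter (fun m => m 0 = 0 ∧ fweight m ≤ 5), F m := by
    apply Finset.sum_subset
    · intro m hm
      simp only [Finset.mem_filter] at hm ⊢
      obtain ⟨hIic, hall, hw⟩ := hm
      refine ⟨hIic, ?_, hw⟩
      have h0 := hall 0
      rw [hlam0] at h0
      have h0' : (m 0 : ℚ) = 0 := le_antisymm h0 (Nat.cast_nonneg _)
      exact_mod_cast h0'
    · intro m hm hnm
      simp only [Finset.mem_filter] at hm hnm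
      obtain ⟨hIic, h0, hw⟩ := hm
      have hfail : ¬ (∀ i : ℕ, (m i : ℚ) ≤ lam i) := fun hall => hnm ⟨hIic, hall, hw⟩
      push_neg at hfail
      obtain ⟨i, hi⟩ := hfail
      rw [hL i] at hi
      have hlt : L i < m i := by exact_mod_cast hi
      have hne : m i ≠ 0 := by omega
      have hz : genChoose (lam i) (m i) = 0 := by
        rw [hL i, genChoose_natCast, Nat.choose_eq_zero_of_lt hlt, Nat.cast_zero]
      rw [hF]
      simp only
      rw [Finset.prod_eq_zero (Finsupp.mem_support_iff.mpr hne) hz, mul_zero]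
  have hstep2 : (Finset.Iic bnd).filter (fun m => m 0 = 0 ∧ fweight m ≤ 5)
      = TL.image enc := by
    ext m
    simp only [Finset.mem_filter, Finset.mem_Iic, Finset.mem_image]
    constructor
    · rintro ⟨hle, h0, hw⟩
      have hle' : ∀ j, m j ≤ bnd j := Finsupp.le_def.mp hle
      have h6 : ∀ j, 6 ≤ j → m j = 0 := by
        intro j hj
        have hb := hle' j
        rw [bnd_apply, if_neg (by omega)] at hb
        omega
      have hfw := fweight_eq m h6
      refine ⟨(m 1, m 2, m 3, m 4, m 5), ?_, ?_⟩
      · rw [mem_TL]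
        simp only
        omega
      · ext j
        obtain _|_|_|_|_|_|j := j
        · rw [enc_0]; exact h0.symm
        · rw [enc_1]
        · rw [enc_2]
        · rw [enc_3]
        · rw [enc_4]
        · rw [enc_5]
        · rw [enc_ge _ _ (by omega), h6 _ (by omega)]
    · rintro ⟨t, ht, rfl⟩
      rw [mem_TL] at ht
      have h6 : ∀ j, 6 ≤ j → enc t j = 0 := fun j hj => enc_ge t j hj
      refine ⟨Finsupp.le_def.mpr ?_, enc_0 t, ?_⟩
      · intro j
        rw [bnd_apply]
        obtain _|_|_|_|_|_|j := j
        · rw [enc_0]; simp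
        · rw [enc_1, if_pos (by omega)]; omega
        · rw [enc_2, if_pos (by omega)]; omega
        · rw [enc_3, if_pos (by omega)]; omega
        · rw [enc_4, if_pos (by omega)]; omega
        · rw [enc_5, if_pos (by omega)]; omega
        · rw [enc_ge _ _ (by omega), if_neg (by omega)]
      · rw [fweight_eq _ h6, enc_1, enc_2, enc_3, enc_4, enc_5]
        omega
  have hinj : ∀ t1 ∈ TL, ∀ t2 ∈ TL, enc t1 = enc t2 → t1 = t2 := by
    intro t1 _ t2 _ h
    have h1 : t1.1 = t2.1 := by rw [← enc_1 t1, ← enc_1 t2, h]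
    have h2 : t1.2.1 = t2.2.1 := by rw [← enc_2 t1, ← enc_2 t2, h]
    have h3 : t1.2.2.1 = t2.2.2.1 := by rw [← enc_3 t1, ← enc_3 t2, h]
    have h4 : t1.2.2.2.1 = t2.2.2.2.1 := by rw [← enc_4 t1, ← enc_4 t2, h]
    have h5 : t1.2.2.2.2 = t2.2.2.2.2 := by rw [← enc_5 t1, ← enc_5 t2, h]
    exact Prod.ext h1 (Prod.ext h2 (Prod.ext h3 (Prod.ext h4 h5)))
  have hFenc : ∀ t ∈ TL, F (enc t)
      = (-1:ℚ)^(t.1 + t.2.1 + t.2.2.1 + t.2.2.2.1 + t.2.2.2.2) *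
        (genChoose (lam 1) t.1 * genChoose (lam 2) t.2.1 * genChoose (lam 3) t.2.2.1 *
          genChoose (lam 4) t.2.2.2.1 * genChoose (lam 5) t.2.2.2.2) := by
    intro t _
    have h6 : ∀ j, 6 ≤ j → enc t j = 0 := fun j hj => enc_ge t j hj
    rw [hF]
    simp only
    rw [flength_eq _ h6, prod_eq _ h6 (fun i k => genChoose (lam i) k)
      (fun i => genChoose_zero _)]
    rw [enc_0, enc_1, enc_2, enc_3, enc_4, enc_5, genChoose_zero]
    ring
  rw [hstep1, hstep2, Finset.sum_image hinj, Finset.sum_congr rfl hFenc]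
  have hl1 : lam 1 = (eta 1 : ℚ) + ((q:ℚ) + 1) := by rw [hlam, if_neg (by norm_num), hρ1]
  have hl2 : lam 2 = (eta 2 : ℚ) + ((q:ℚ)^2 - q) / 2 := by
    rw [hlam, if_neg (by norm_num), hρ2]
  have hl3 : lam 3 = (eta 3 : ℚ) + ((q:ℚ)^3 - q) / 3 := by
    rw [hlam, if_neg (by norm_num), hρ3]
  have hl4 : lam 4 = ((q:ℚ)^4 - (q:ℚ)^2) / 4 := by
    rw [hlam, if_neg (by norm_num), hρ4, heta4 4 (by norm_num)]
    norm_num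
  have hl5 : lam 5 = ((q:ℚ)^5 - q) / 5 := by
    rw [hlam, if_neg (by norm_num), hρ5, heta4 5 (by norm_num)]
    norm_num
  simp only [TL, Finset.sum_filter, Finset.sum_product]
  simp only [Finset.sum_range_succ, Finset.sum_range_zero]
  norm_num only
  simp only [hl1, hl2, hl3, hl4, hl5, genChoose_zero, genChoose_one, genChoose_two,
    genChoose_three, genChoose_four, genChoose_five]
  obtain ⟨e1, he1⟩ : ∃ x, eta 1 = x := ⟨_, rfl⟩
  obtain ⟨e2, he2⟩ : ∃ x, eta 2 = x := ⟨_, rfl⟩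
  obtain ⟨e3, he3⟩ : ∃ x, eta 3 = x := ⟨_, rfl⟩
  rw [he1, he2, he3] at hwt
  rw [he1, he2, he3]
  have hb1 : e1 ≤ 3 := by omega
  have hb2 : e2 ≤ 1 := by omega
  have hb3 : e3 ≤ 1 := by omega
  interval_cases e1 <;> interval_cases e2 <;> interval_cases e3 <;>
    first
      | (exfalso; omega)
      | (push_cast; ring)
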